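/- Let z̃₁, …, z̃ₙ be independent real-valued random variables such that each z̃ᵢ has support contained in [−1,1], mean E[z̃ᵢ] = 0, and variance E[z̃ᵢ²] = θ for some θ > 0. Then for every c with 0 < c < θ·√n, the probability that ∑_{i=1}^n |z̃ᵢ| ≤ c·√n is at most exp(−(θ·√n − c)²/(2θ)). -/

import Mathlib

open MeasureTheory

lemma exp_neg_le_quad {x : ℝ} (hx : 0 ≤ x) :
    Real.exp (-x) ≤ 1 - x + x ^ 2 / 2 := by
  have key : ∀ t : ℝ, HasDerivAt (fun t => 1 - t + t ^ 2 / 2 - Real.exp (-t))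
      (-1 + t + Real.exp (-t)) t := by
    intro t
    have h1 : HasDerivAt (fun t : ℝ => Real.exp (-t)) (-Real.exp (-t)) t := by
      convert (hasDerivAt_neg' t).exp using 1; ring
    have h2 : HasDerivAt (fun t : ℝ => 1 - t + t ^ 2 / 2) (-1 + t) t := by
      have hp : HasDerivAt (fun t : ℝ => t ^ 2 / 2) (t) t := by
        simpa using (hasDerivAt_pow 2 t).div_const 2
      exact (((hasDerivAt_const t (1:ℝ)).sub (hasDerivAt_id' t)).add hp).congr_deriv (by ring)
    exact (h2.sub h1).congr_deriv (by ring)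
  have hmono : Monotone (fun t => 1 - t + t ^ 2 / 2 - Real.exp (-t)) := by
    apply monotone_of_deriv_nonneg
    · exact fun t => (key t).differentiableAt
    · intro t
      rw [(key t).deriv]
      have := Real.add_one_le_exp (-t)
      linarith
  have h0 := hmono hx
  simp only [Real.exp_zero] at h0
  norm_num at h0
  linarith

theorem robust_budgeted_uncertainty_bound
    {Ω : Type*} [MeasurableSpace Ω] (μ : Measure Ω) [IsProbabilityMeasure μ]
    (n : ℕ) (hn : 0 < n) (Z : Fin n → Ω → ℝ)
    (hmeas : ∀ i, Measurable (Z i))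
    (hindep : ProbabilityTheory.iIndepFun Z μ)
    (hsupp : ∀ i, ∀ᵐ ω ∂μ, Z i ω ∈ Set.Icc (-1 : ℝ) 1)
    (θ : ℝ) (hθ : 0 < θ)
    (hmean : ∀ i, ∫ ω, Z i ω ∂μ = 0)
    (hvar : ∀ i, ∫ ω, (Z i ω) ^ 2 ∂μ = θ)
    (c : ℝ) (hc0 : 0 < c) (hc : c < θ * Real.sqrt n) :
    μ {ω | ∑ i, |Z i ω| ≤ c * Real.sqrt n} ≤
      ENNReal.ofReal (Real.exp (-(θ * Real.sqrt n - c) ^ 2 / (2 * θ))) := by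
  classical
  set s : ℝ := Real.sqrt n with hs_def
  have hs : 0 < s := Real.sqrt_pos.mpr (by exact_mod_cast hn)
  have hs2 : s ^ 2 = n := Real.sq_sqrt (by positivity)
  set lam : ℝ := (θ * s - c) / (θ * s) with hlam_def
  have hθs : 0 < θ * s := mul_pos hθ hs
  have hlam_pos : 0 < lam := div_pos (by linarith) hθs
  have hlam_nonneg : 0 ≤ lam := hlam_pos.le
  -- X i = |Z i|
  set X : Fin n → Ω → ℝ := fun i ω => |Z i ω| with hX_def
  have hXmeas : ∀ i, Measurable (X i) := fun i => (hmeas i).abs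
  have hXindep : ProbabilityTheory.iIndepFun X μ :=
    hindep.comp (fun _ (x : ℝ) => |x|) (fun _ => measurable_abs)
  have hXbd : ∀ i, ∀ᵐ ω ∂μ, X i ω ≤ 1 := by
    intro i
    filter_upwards [hsupp i] with ω hω
    exact abs_le.mpr ⟨hω.1, hω.2⟩
  have hXnn : ∀ i ω, 0 ≤ X i ω := fun i ω => abs_nonneg _
  -- integrabilities
  have hXint : ∀ i, Integrable (X i) μ := by
    intro i
    refine (integrable_const (1:ℝ)).mono' (hXmeas i).aestronglyMeasurable ?_
    filter_upwards [hXbd i] with ω hω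
    rw [Real.norm_eq_abs, abs_of_nonneg (hXnn i ω)]; exact hω
  have hSqint : ∀ i, Integrable (fun ω => (Z i ω) ^ 2) μ := by
    intro i
    refine (integrable_const (1:ℝ)).mono'
      (((hmeas i).pow_const 2).aestronglyMeasurable) ?_
    filter_upwards [hXbd i] with ω hω
    rw [Real.norm_eq_abs, abs_of_nonneg (sq_nonneg _), ← sq_abs]
    nlinarith [hXnn i ω]
  have hExpint : ∀ i, Integrable (fun ω => Real.exp (-lam * X i ω)) μ := by
    intro i
    refine (integrable_const (1:ℝ)).mono'
      (((hXmeas i).const_mul (-lam)).exp.aestronglyMeasurable) ?_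
    refine Filter.Eventually.of_forall fun ω => ?_
    rw [Real.norm_eq_abs, abs_of_nonneg (Real.exp_pos _).le]
    rw [← Real.exp_zero]
    apply Real.exp_le_exp.mpr
    have := hXnn i ω
    nlinarith
  -- mean lower bound:  θ ≤ E[X i]
  have hEX : ∀ i, θ ≤ ∫ ω, X i ω ∂μ := by
    intro i
    rw [← hvar i]
    refine integral_mono_ae (hSqint i) (hXint i) ?_
    filter_upwards [hXbd i] with ω hω
    have h0 := hXnn i ω
    have : (Z i ω) ^ 2 = X i ω ^ 2 := (sq_abs _).symm
    rw [this]
    nlinarith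
  -- per-coordinate mgf bound
  have hmgf : ∀ i, ProbabilityTheory.mgf (X i) μ (-lam) ≤
      Real.exp (lam ^ 2 * θ / 2 - lam * θ) := by
    intro i
    rw [ProbabilityTheory.mgf]
    have hb : ∫ ω, Real.exp (-lam * X i ω) ∂μ ≤
        ∫ ω, (1 - lam * X i ω + lam ^ 2 * (Z i ω) ^ 2 / 2) ∂μ := by
      refine integral_mono_ae (hExpint i) ?_ ?_
      · exact ((integrable_const (1:ℝ)).sub ((hXint i).const_mul lam)).add
          (((hSqint i).const_mul (lam ^ 2)).div_const 2)
      · refine Filter.Eventually.of_forall fun ω => ?_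
        have h := exp_neg_le_quad (mul_nonneg hlam_nonneg (hXnn i ω))
        have h2 : (lam * X i ω) ^ 2 = lam ^ 2 * (Z i ω) ^ 2 := by
          rw [mul_pow, hX_def]; rw [sq_abs]
        show Real.exp (-lam * X i ω) ≤ 1 - lam * X i ω + lam ^ 2 * (Z i ω) ^ 2 / 2
        rw [neg_mul]
        linarith
    have i1 : Integrable (fun ω => 1 - lam * X i ω) μ := by
      exact (integrable_const (1:ℝ)).sub ((hXint i).const_mul lam)
    have i2 : Integrable (fun ω => lam ^ 2 * (Z i ω) ^ 2 / 2) μ := by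
      exact ((hSqint i).const_mul (lam ^ 2)).div_const 2
    have hval : ∫ ω, (1 - lam * X i ω + lam ^ 2 * (Z i ω) ^ 2 / 2) ∂μ =
        1 - lam * (∫ ω, X i ω ∂μ) + lam ^ 2 * θ / 2 := by
      rw [integral_add i1 i2]
      have e1 : ∫ ω, (1 - lam * X i ω) ∂μ = 1 - lam * (∫ ω, X i ω ∂μ) := by
        rw [integral_sub (integrable_const (1:ℝ)) ((hXint i).const_mul lam),
          integral_const_mul, integral_const]
        simp
      have e2 : ∫ ω, lam ^ 2 * (Z i ω) ^ 2 / 2 ∂μ = lam ^ 2 * θ / 2 := by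
        rw [integral_div, integral_const_mul, hvar i]
      rw [e1, e2]
    have hfinal : 1 - lam * (∫ ω, X i ω ∂μ) + lam ^ 2 * θ / 2 ≤
        Real.exp (lam ^ 2 * θ / 2 - lam * θ) := by
      have h1 : 1 - lam * (∫ ω, X i ω ∂μ) + lam ^ 2 * θ / 2 ≤
          1 - lam * θ + lam ^ 2 * θ / 2 := by
        nlinarith [hEX i]
      have h2 := Real.add_one_le_exp (lam ^ 2 * θ / 2 - lam * θ)
      linarith
    calc ∫ ω, Real.exp (-lam * X i ω) ∂μ
        ≤ 1 - lam * (∫ ω, X i ω ∂μ) + lam ^ 2 * θ / 2 := hb.trans_eq hval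
      _ ≤ _ := hfinal
  -- Chernoff bound
  have hint_sum : Integrable (fun ω => Real.exp (-lam * (∑ i, X i) ω)) μ :=
    hXindep.integrable_exp_mul_sum hXmeas (fun i _ => hExpint i)
  have hchern := ProbabilityTheory.measure_le_le_exp_mul_mgf (μ := μ)
    (X := ∑ i, X i) (c * s) (t := -lam) (by linarith) hint_sum
  rw [ProbabilityTheory.iIndepFun.mgf_sum hXindep hXmeas] at hchern
  have hprod : ∏ i : Fin n, ProbabilityTheory.mgf (X i) μ (-lam) ≤
      Real.exp ((n : ℝ) * (lam ^ 2 * θ / 2 - lam * θ)) := by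
    calc ∏ i : Fin n, ProbabilityTheory.mgf (X i) μ (-lam)
        ≤ ∏ i : Fin n, Real.exp (lam ^ 2 * θ / 2 - lam * θ) := by
          refine Finset.prod_le_prod (fun i _ => ProbabilityTheory.mgf_nonneg)
            (fun i _ => hmgf i)
      _ = Real.exp ((n : ℝ) * (lam ^ 2 * θ / 2 - lam * θ)) := by
          rw [Finset.prod_const, ← Real.exp_nat_mul]
          simp
  have hcomb : (μ {ω | (∑ i, X i) ω ≤ c * s}).toReal ≤
      Real.exp (lam * (c * s)) * Real.exp ((n : ℝ) * (lam ^ 2 * θ / 2 - lam * θ)) := by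
    refine hchern.trans ?_
    rw [neg_neg]
    exact mul_le_mul_of_nonneg_left hprod (Real.exp_pos _).le
  rw [← Real.exp_add] at hcomb
  have hexp_eq : lam * (c * s) + (n : ℝ) * (lam ^ 2 * θ / 2 - lam * θ) =
      -(θ * s - c) ^ 2 / (2 * θ) := by
    rw [← hs2, hlam_def]
    field_simp
    ring
  rw [hexp_eq] at hcomb
  have hset : {ω | (∑ i, X i) ω ≤ c * s} = {ω | ∑ i, |Z i ω| ≤ c * s} := by
    ext ω; simp [hX_def]
  rw [hset] at hcomb
  calc μ {ω | ∑ i, |Z i ω| ≤ c * s}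
      = ENNReal.ofReal ((μ {ω | ∑ i, |Z i ω| ≤ c * s}).toReal) :=
        (ENNReal.ofReal_toReal (measure_ne_top μ _)).symm
    _ ≤ ENNReal.ofReal (Real.exp (-(θ * s - c) ^ 2 / (2 * θ))) :=
        ENNReal.ofReal_le_ofReal hcomb
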